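/- For any instance with two groups of agents of sizes 2 and 1, where all three agents have responsive (monotonic, normalized) valuations over a finite set G of goods, there exists an allocation (B₁, B₂) of G to the two groups with ||B₁| − |B₂|| ≤ 1 that is EF1 for every agent. -/

import Mathlib

open Finset

variable {γ : Type*} [DecidableEq γ]

/-- An allocation is EF1 for an agent with valuation `u` whose group receives `mine`,
the other group receiving `other`. -/
def EF1 (u : Finset γ → ℝ) (mine other : Finset γ) : Prop :=
  ∃ B ⊆ other, B.card ≤ 1 ∧ u (other \ B) ≤ u mine

/-- A valuation is monotonic if larger sets are weakly more valuable. -/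
def Monotonic (u : Finset γ → ℝ) : Prop :=
  ∀ ⦃S T : Finset γ⦄, S ⊆ T → u S ≤ u T

/-- A valuation is normalized if the empty set has value zero. -/
def Normalized (u : Finset γ → ℝ) : Prop :=
  u ∅ = 0

/-- A valuation is responsive if replacing a good outside a set by a weakly better good
(with respect to singleton values) weakly increases the value of the set. -/
def Responsive (u : Finset γ → ℝ) : Prop :=
  ∀ (S : Finset γ) (g g' : γ), g ∉ S → g' ∉ S → u {g'} ≤ u {g} →
    u (insert g' S) ≤ u (insert g S)

/-! ### Auxiliary machinery -/

/-- Two-at-a-time recursion principle on lists. -/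
def twoStep {α : Type*} {motive : List α → Sort*} (h0 : motive []) (h1 : ∀ p, motive [p])
    (h2 : ∀ p q R, motive R → motive (p :: q :: R)) : ∀ R, motive R
  | [] => h0
  | [p] => h1 p
  | p :: q :: R => h2 p q R (twoStep h0 h1 h2 R)

/-- Colors alternate on consecutive pairs of the list. -/
def AltPairs (c : γ → Bool) : List γ → Prop
  | [] => True
  | [_] => True
  | p :: q :: R => c q = !c p ∧ AltPairs c R

/-- The pairing of consecutive elements of a list, as a function (identity off the list and on
the unpaired last element of an odd-length list). -/
def pairFn : List γ → γ → γ
  | [], z => z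
  | [_], z => z
  | p :: q :: R, z => if z = p then q else if z = q then p else pairFn R z

lemma pairFn_not_mem : ∀ (R : List γ) (x : γ), x ∉ R → pairFn R x = x := by
  intro R
  induction R using twoStep with
  | h0 => intro x _; rfl
  | h1 p => intro x _; rfl
  | h2 p q R ih =>
    intro x hx
    have hxp : x ≠ p := fun h => hx (by simp [h])
    have hxq : x ≠ q := fun h => hx (by simp [h])
    have hxR : x ∉ R := fun h => hx (by simp [h])
    simp [pairFn, hxp, hxq, ih x hxR]

lemma pairFn_mem : ∀ (R : List γ) (x : γ), x ∈ R → pairFn R x ∈ R := by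
  intro R
  induction R using twoStep with
  | h0 => intro x hx; exact absurd hx (by simp)
  | h1 p => intro x hx; simpa [pairFn] using hx
  | h2 p q R ih =>
    intro x hx
    by_cases hxp : x = p
    · simp [pairFn, hxp]
    by_cases hxq : x = q
    · simp [pairFn, hxq, hxp]
    · have hxR : x ∈ R := by
        rcases List.mem_cons.mp hx with h | h
        · exact absurd h hxp
        rcases List.mem_cons.mp h with h' | h'
        · exact absurd h' hxq
        · exact h'
      have := ih x hxR
      simp [pairFn, hxp, hxq]
      right; right; exact this

lemma pairFn_invol : ∀ (R : List γ), R.Nodup → ∀ x, pairFn R (pairFn R x) = x := by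
  intro R
  induction R using twoStep with
  | h0 => intro _ x; rfl
  | h1 p => intro _ x; rfl
  | h2 p q R ih =>
    intro hnd x
    have h1 := List.nodup_cons.mp hnd
    have h2 := List.nodup_cons.mp h1.2
    have hpq : p ≠ q := fun h => h1.1 (by simp [h])
    have hpR : p ∉ R := fun h => h1.1 (by simp [h])
    have hqR : q ∉ R := h2.1
    have hndR : R.Nodup := h2.2
    by_cases hxp : x = p
    · subst hxp
      simp [pairFn, hpq, hpq.symm]
    by_cases hxq : x = q
    · subst hxq
      simp [pairFn, hpq, hpq.symm]
    · have e : pairFn (p :: q :: R) x = pairFn R x := by simp [pairFn, hxp, hxq]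
      rw [e]
      by_cases hxR : x ∈ R
      · have hmem := pairFn_mem R x hxR
        have hp' : pairFn R x ≠ p := fun h => hpR (h ▸ hmem)
        have hq' : pairFn R x ≠ q := fun h => hqR (h ▸ hmem)
        simp [pairFn, hp', hq', ih hndR x]
      · rw [pairFn_not_mem R x hxR]
        simp [pairFn, hxp, hxq, pairFn_not_mem R x hxR]

lemma altPairs_of_pairFn (c : γ → Bool) : ∀ R : List γ, R.Nodup →
    (∀ x ∈ R, pairFn R x ≠ x → c (pairFn R x) = !c x) → AltPairs c R := by
  intro R
  induction R using twoStep with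
  | h0 => intro _ _; trivial
  | h1 p => intro _ _; trivial
  | h2 p q R ih =>
    intro hnd h
    have h1 := List.nodup_cons.mp hnd
    have h2 := List.nodup_cons.mp h1.2
    have hpq : p ≠ q := fun h' => h1.1 (by simp [h'])
    have hpR : p ∉ R := fun h' => h1.1 (by simp [h'])
    have hqR : q ∉ R := h2.1
    constructor
    · have e : pairFn (p :: q :: R) p = q := by simp [pairFn]
      have := h p (by simp) (by rw [e]; exact hpq.symm)
      rwa [e] at this
    · apply ih h2.2
      intro x hx hne
      have hxp : x ≠ p := fun h' => hpR (h' ▸ hx)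
      have hxq : x ≠ q := fun h' => hqR (h' ▸ hx)
      have e : pairFn (p :: q :: R) x = pairFn R x := by simp [pairFn, hxp, hxq]
      have := h x (by simp [hx]) (by rw [e]; exact hne)
      rwa [e] at this

lemma altPairs_not (c : γ → Bool) : ∀ R : List γ, AltPairs c R →
    AltPairs (fun x => !c x) R := by
  intro R
  induction R using twoStep with
  | h0 => intro _; trivial
  | h1 p => intro _; trivial
  | h2 p q R ih =>
    intro h
    obtain ⟨hqp, hR⟩ : c q = !c p ∧ AltPairs c R := h
    exact ⟨by simp [hqp], ih hR⟩

lemma alt_balance (c : γ → Bool) : ∀ R : List γ, AltPairs c R →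
    |((R.filter fun x => c x).length : ℤ) - ((R.filter fun x => !c x).length : ℤ)| ≤ 1 := by
  intro R
  induction R using twoStep with
  | h0 => intro _; simp
  | h1 p => intro _; cases hcp : c p <;> simp [List.filter_cons, hcp]
  | h2 p q R ih =>
    intro h
    obtain ⟨hqp, hR⟩ : c q = !c p ∧ AltPairs c R := h
    have := ih hR
    rw [abs_le] at this ⊢
    cases hcp : c p <;> rw [hcp] at hqp <;>
      simp only [List.filter_cons, hcp, hqp, Bool.not_true, Bool.not_false, if_pos, if_neg,
        Bool.false_eq_true, Bool.true_eq_false, ite_true, ite_false, List.length_cons] <;>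
      push_cast <;> omega

/-- The key exchange chain: the "false" side of the remaining list, minus nothing, is worth at
most the "true" side plus one good `g` dominating the whole list. -/
lemma core (w : Finset γ → ℝ) (hm : Monotonic w) (hr : Responsive w) (c : γ → Bool) :
    ∀ R : List γ, R.Nodup → R.Pairwise (fun a b => w {b} ≤ w {a}) → AltPairs c R →
      ∀ (F : Finset γ) (g : γ), (∀ x ∈ R, w {x} ≤ w {g}) → g ∉ R → g ∉ F →
      (∀ x ∈ R, x ∉ F) →
      w ((R.filter fun x => !c x).toFinset ∪ F) ≤
        w (insert g ((R.filter fun x => c x).toFinset ∪ F)) := by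
  intro R
  induction R using twoStep with
  | h0 =>
    intro _ _ _ F g _ _ _ _
    simp only [List.filter_nil, List.toFinset_nil, Finset.empty_union]
    exact hm (Finset.subset_insert _ _)
  | h1 p =>
    intro _ _ _ F g hdom hgR hgF hF
    have hpF : p ∉ F := hF p (by simp)
    cases hcp : c p
    · have e1 : ([p].filter fun x => !c x) = [p] := by simp [hcp]
      have e2 : ([p].filter fun x => c x) = [] := by simp [hcp]
      rw [e1, e2]
      simp only [List.toFinset_cons, List.toFinset_nil, Finset.insert_union,
        Finset.empty_union]
      exact hr F g p hgF hpF (hdom p (by simp))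
    · have e1 : ([p].filter fun x => !c x) = [] := by simp [hcp]
      have e2 : ([p].filter fun x => c x) = [p] := by simp [hcp]
      rw [e1, e2]
      simp only [List.toFinset_cons, List.toFinset_nil, Finset.insert_union,
        Finset.empty_union]
      exact hm ((Finset.subset_insert p F).trans (Finset.subset_insert g _))
  | h2 p q R ih =>
    intro hnd hs ha F g hdom hgR hgF hF
    obtain ⟨hqp, haR⟩ : c q = !c p ∧ AltPairs c R := ha
    have h1 := List.nodup_cons.mp hnd
    have h2 := List.nodup_cons.mp h1.2
    have hpq : p ≠ q := fun h => h1.1 (by simp [h])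
    have hpR : p ∉ R := fun h => h1.1 (by simp [h])
    have hqR : q ∉ R := h2.1
    have hndR : R.Nodup := h2.2
    have hs1 := List.pairwise_cons.mp hs
    have hs2 := List.pairwise_cons.mp hs1.2
    have hdomp : ∀ x ∈ R, w {x} ≤ w {p} := fun x hx => hs1.1 x (by simp [hx])
    have hdomq : ∀ x ∈ R, w {x} ≤ w {q} := fun x hx => hs2.1 x hx
    have hgp : g ≠ p := fun h => hgR (by simp [h])
    have hgq : g ≠ q := fun h => hgR (by simp [h])
    have hgR' : g ∉ R := fun h => hgR (by simp [h])
    have hpF : p ∉ F := hF p (by simp)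
    have hqF : q ∉ F := hF q (by simp)
    have hgXf : g ∉ (R.filter fun x => c x).toFinset := fun h =>
      hgR' (List.mem_of_mem_filter (List.mem_toFinset.mp h))
    have hqXf : q ∉ (R.filter fun x => c x).toFinset := fun h =>
      hqR (List.mem_of_mem_filter (List.mem_toFinset.mp h))
    have hpXf : p ∉ (R.filter fun x => c x).toFinset := fun h =>
      hpR (List.mem_of_mem_filter (List.mem_toFinset.mp h))
    set Xf := (R.filter fun x => c x).toFinset with hXf
    set Yf := (R.filter fun x => !c x).toFinset with hYf
    cases hcp : c p
    · -- c p = false, c q = true : p goes to the "false" side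
      rw [hcp] at hqp
      have eYl : ((p :: q :: R).filter fun x => !c x) = p :: (R.filter fun x => !c x) := by
        simp [List.filter_cons, hcp, hqp]
      have eXl : ((p :: q :: R).filter fun x => c x) = q :: (R.filter fun x => c x) := by
        simp [List.filter_cons, hcp, hqp]
      rw [eYl, eXl, List.toFinset_cons, List.toFinset_cons]
      have key := ih hndR hs2.2 haR (insert p F) q hdomq hqR
        (by simp [hqF, hpq.symm]) (fun x hx => by
          simp only [Finset.mem_insert, not_or]
          exact ⟨fun h => hpR (h ▸ hx), hF x (by simp [hx])⟩)
      have hqS : q ∉ Xf ∪ F := by simp [hqXf, hqF]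
      have hpS : p ∉ insert q (Xf ∪ F) := by simp [hpq, hpXf, hpF]
      have hgS : g ∉ insert q (Xf ∪ F) := by simp [hgq, hgXf, hgF]
      have swap := hr (insert q (Xf ∪ F)) g p hgS hpS (hdom p (by simp))
      calc w (insert p Yf ∪ F) = w (Yf ∪ insert p F) := by
            rw [Finset.insert_union, Finset.union_insert]
        _ ≤ w (insert q (Xf ∪ insert p F)) := key
        _ = w (insert p (insert q (Xf ∪ F))) := by
            rw [Finset.union_insert, Finset.insert_comm]
        _ ≤ w (insert g (insert q (Xf ∪ F))) := swap
        _ = w (insert g (insert q Xf ∪ F)) := by rw [Finset.insert_union]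
    · -- c p = true, c q = false : p goes to the "true" side
      rw [hcp] at hqp
      have eYl : ((p :: q :: R).filter fun x => !c x) = q :: (R.filter fun x => !c x) := by
        simp [List.filter_cons, hcp, hqp]
      have eXl : ((p :: q :: R).filter fun x => c x) = p :: (R.filter fun x => c x) := by
        simp [List.filter_cons, hcp, hqp]
      rw [eYl, eXl, List.toFinset_cons, List.toFinset_cons]
      have key := ih hndR hs2.2 haR (insert q F) p hdomp hpR
        (by simp [hpF, hpq]) (fun x hx => by
          simp only [Finset.mem_insert, not_or]
          exact ⟨fun h => hqR (h ▸ hx), hF x (by simp [hx])⟩)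
      have hpS : p ∉ Xf ∪ F := by simp [hpXf, hpF]
      have hqS : q ∉ insert p (Xf ∪ F) := by simp [hpq.symm, hqXf, hqF]
      have hgS : g ∉ insert p (Xf ∪ F) := by simp [hgp, hgXf, hgF]
      have swap := hr (insert p (Xf ∪ F)) g q hgS hqS (hdom q (by simp))
      calc w (insert q Yf ∪ F) = w (Yf ∪ insert q F) := by
            rw [Finset.insert_union, Finset.union_insert]
        _ ≤ w (insert p (Xf ∪ insert q F)) := key
        _ = w (insert q (insert p (Xf ∪ F))) := by
            rw [Finset.union_insert, Finset.insert_comm]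
        _ ≤ w (insert g (insert p (Xf ∪ F))) := swap
        _ = w (insert g (insert p Xf ∪ F)) := by rw [Finset.insert_union]

/-- From an alternating coloring of a sorted list we get EF1 of the "true" side
against the "false" side. -/
lemma ef1_of_alt (w : Finset γ → ℝ) (hm : Monotonic w) (hr : Responsive w) (c : γ → Bool) :
    ∀ R : List γ, R.Nodup → R.Pairwise (fun a b => w {b} ≤ w {a}) → AltPairs c R →
    EF1 w ((R.filter fun x => c x).toFinset) ((R.filter fun x => !c x).toFinset) := by
  intro R
  match R with
  | [] =>
    intro _ _ _
    exact ⟨∅, Finset.empty_subset _, by simp, by simp⟩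
  | [p] =>
    intro _ _ _
    cases hcp : c p
    · have e1 : ([p].filter fun x => !c x) = [p] := by simp [hcp]
      have e2 : ([p].filter fun x => c x) = [] := by simp [hcp]
      rw [e1, e2]
      refine ⟨{p}, by simp, by simp, ?_⟩
      simp
    · have e1 : ([p].filter fun x => !c x) = [] := by simp [hcp]
      have e2 : ([p].filter fun x => c x) = [p] := by simp [hcp]
      rw [e1, e2]
      exact ⟨∅, Finset.empty_subset _, by simp, by
        simp only [List.toFinset_nil, Finset.sdiff_empty]
        exact hm (Finset.empty_subset _)⟩
  | p :: q :: R' =>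
    intro hnd hs ha
    obtain ⟨hqp, haR⟩ : c q = !c p ∧ AltPairs c R' := ha
    have h1 := List.nodup_cons.mp hnd
    have h2 := List.nodup_cons.mp h1.2
    have hpq : p ≠ q := fun h => h1.1 (by simp [h])
    have hpR : p ∉ R' := fun h => h1.1 (by simp [h])
    have hqR : q ∉ R' := h2.1
    have hndR : R'.Nodup := h2.2
    have hs1 := List.pairwise_cons.mp hs
    have hs2 := List.pairwise_cons.mp hs1.2
    have hdomp : ∀ x ∈ R', w {x} ≤ w {p} := fun x hx => hs1.1 x (by simp [hx])
    have hdomq : ∀ x ∈ R', w {x} ≤ w {q} := fun x hx => hs2.1 x hx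
    have hqYf : q ∉ (R'.filter fun x => !c x).toFinset := fun h =>
      hqR (List.mem_of_mem_filter (List.mem_toFinset.mp h))
    have hpYf : p ∉ (R'.filter fun x => !c x).toFinset := fun h =>
      hpR (List.mem_of_mem_filter (List.mem_toFinset.mp h))
    cases hcp : c p
    · -- c p = false : remove p from the false side, compare against q-headed true side
      rw [hcp] at hqp
      have eYl : ((p :: q :: R').filter fun x => !c x) = p :: (R'.filter fun x => !c x) := by
        simp [List.filter_cons, hcp, hqp]
      have eXl : ((p :: q :: R').filter fun x => c x) = q :: (R'.filter fun x => c x) := by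
        simp [List.filter_cons, hcp, hqp]
      rw [eYl, eXl, List.toFinset_cons, List.toFinset_cons]
      refine ⟨{p}, by simp, by simp, ?_⟩
      rw [Finset.sdiff_singleton_eq_erase, Finset.erase_insert hpYf]
      have key := core w hm hr c R' hndR hs2.2 haR ∅ q hdomq hqR
        (Finset.notMem_empty q) (fun x _ => Finset.notMem_empty x)
      simpa using key
    · rw [hcp] at hqp
      have eYl : ((p :: q :: R').filter fun x => !c x) = q :: (R'.filter fun x => !c x) := by
        simp [List.filter_cons, hcp, hqp]
      have eXl : ((p :: q :: R').filter fun x => c x) = p :: (R'.filter fun x => c x) := by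
        simp [List.filter_cons, hcp, hqp]
      rw [eYl, eXl, List.toFinset_cons, List.toFinset_cons]
      refine ⟨{q}, by simp, by simp, ?_⟩
      rw [Finset.sdiff_singleton_eq_erase, Finset.erase_insert hqYf]
      have key := core w hm hr c R' hndR hs2.2 haR ∅ p hdomp hpR
        (Finset.notMem_empty p) (fun x _ => Finset.notMem_empty x)
      simpa using key

section Coloring
variable {γ : Type*} [DecidableEq γ]

/-- Union of two involutive pairings admits a proper 2-coloring. -/
lemma exists_coloring : ∀ (s : Finset γ) (σ₀ σ₁ : γ → γ),
    (∀ x ∈ s, σ₀ x ∈ s) → (∀ x ∈ s, σ₀ (σ₀ x) = x) →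
    (∀ x ∈ s, σ₁ x ∈ s) → (∀ x ∈ s, σ₁ (σ₁ x) = x) →
    ∃ c : γ → Bool, ∀ x ∈ s,
      (σ₀ x ≠ x → c (σ₀ x) = !c x) ∧ (σ₁ x ≠ x → c (σ₁ x) = !c x) := by
  classical
  intro s
  induction s using Finset.strongInduction with
  | _ s ih =>
    intro σ₀ σ₁ h0c h0i h1c h1i
    have inj0 : ∀ u ∈ s, ∀ z ∈ s, σ₀ u = σ₀ z → u = z := fun u hu z hz h => by
      rw [← h0i u hu, h, h0i z hz]
    have inj1 : ∀ u ∈ s, ∀ z ∈ s, σ₁ u = σ₁ z → u = z := fun u hu z hz h => by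
      rw [← h1i u hu, h, h1i z hz]
    by_cases H0 : ∃ x ∈ s, σ₀ x ≠ x
    · obtain ⟨x, hxs, hx0⟩ := H0
      have hy : σ₀ x ∈ s := h0c x hxs
      set y := σ₀ x with hydef
      have hys : y ∈ s := hy
      have hyx : y ≠ x := hx0
      have hσ0y : σ₀ y = x := h0i x hxs
      set s' := (s.erase x).erase y with hs'def
      have hsub : s' ⊂ s := Finset.ssubset_of_subset_of_ssubset (Finset.erase_subset _ _) (Finset.erase_ssubset hxs)
      have hmem' : ∀ u ∈ s', u ∈ s ∧ u ≠ x ∧ u ≠ y := by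
        intro u hu
        have h1 := Finset.mem_of_mem_erase hu
        exact ⟨Finset.mem_of_mem_erase h1, Finset.ne_of_mem_erase h1, Finset.ne_of_mem_erase hu⟩
      have hmem'' : ∀ u, u ∈ s → u ≠ x → u ≠ y → u ∈ s' :=
        fun u hu h1 h2 => Finset.mem_erase.mpr ⟨h2, Finset.mem_erase.mpr ⟨h1, hu⟩⟩
      have hne0x : ∀ u ∈ s', σ₀ u ≠ x := by
        intro u hu h
        exact (hmem' u hu).2.2 (inj0 u (hmem' u hu).1 y hys (h.trans hσ0y.symm))
      have hne0y : ∀ u ∈ s', σ₀ u ≠ y := by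
        intro u hu h
        exact (hmem' u hu).2.1 (inj0 u (hmem' u hu).1 x hxs (h.trans hydef))
      have h0c' : ∀ u ∈ s', σ₀ u ∈ s' := fun u hu =>
        hmem'' _ (h0c u (hmem' u hu).1) (hne0x u hu) (hne0y u hu)
      have h0i' : ∀ u ∈ s', σ₀ (σ₀ u) = u := fun u hu => h0i u (hmem' u hu).1
      -- data about σ₁ at x and y
      have has : σ₁ x ∈ s := h1c x hxs
      have hbs : σ₁ y ∈ s := h1c y hys
      have hσ1a : σ₁ (σ₁ x) = x := h1i x hxs
      have hσ1b : σ₁ (σ₁ y) = y := h1i y hys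
      by_cases hay : σ₁ x = y
      · -- Case A : x and y are also σ₁-partners; no patching needed
        have hbx : σ₁ y = x := by rw [← hay, hσ1a]
        have hne1x : ∀ u ∈ s', σ₁ u ≠ x := by
          intro u hu h
          exact (hmem' u hu).2.2 (inj1 u (hmem' u hu).1 y hys (h.trans hbx.symm))
        have hne1y : ∀ u ∈ s', σ₁ u ≠ y := by
          intro u hu h
          exact (hmem' u hu).2.1 (inj1 u (hmem' u hu).1 x hxs (h.trans hay.symm))
        have h1c' : ∀ u ∈ s', σ₁ u ∈ s' := fun u hu =>
          hmem'' _ (h1c u (hmem' u hu).1) (hne1x u hu) (hne1y u hu)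
        have h1i' : ∀ u ∈ s', σ₁ (σ₁ u) = u := fun u hu => h1i u (hmem' u hu).1
        obtain ⟨c', hc'⟩ := ih s' hsub σ₀ σ₁ h0c' h0i' h1c' h1i'
        refine ⟨fun z => if z = x then true else if z = y then false else c' z, ?_⟩
        intro z hz
        beta_reduce
        by_cases hzx : z = x
        · subst hzx
          constructor
          · intro _; rw [← hydef]; simp [hyx]
          · intro _; rw [hay]; simp [hyx]
        by_cases hzy : z = y
        · subst hzy
          constructor
          · intro _; rw [hσ0y]; simp [hyx, hyx.symm]
          · intro _; rw [hbx]; simp [hyx, hyx.symm]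
        · have hz' : z ∈ s' := hmem'' z hz hzx hzy
          obtain ⟨P0, P1⟩ := hc' z hz'
          constructor
          · intro h
            rw [if_neg (hne0x z hz'), if_neg (hne0y z hz'), if_neg hzx, if_neg hzy]
            exact P0 h
          · intro h
            rw [if_neg (hne1x z hz'), if_neg (hne1y z hz'), if_neg hzx, if_neg hzy]
            exact P1 h
      · -- σ₁ x ≠ y (so σ₁ y ≠ x either)
        have hbnx : σ₁ y ≠ x := by
          intro h
          exact hay (by rw [← hσ1b, h])
        by_cases hax : σ₁ x = x
        · by_cases hby : σ₁ y = y
          · -- Case B1 : x, y both σ₁-fixed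
            have hne1x : ∀ u ∈ s', σ₁ u ≠ x := by
              intro u hu h
              exact (hmem' u hu).2.1 (inj1 u (hmem' u hu).1 x hxs (by rw [h, hax]))
            have hne1y : ∀ u ∈ s', σ₁ u ≠ y := by
              intro u hu h
              exact (hmem' u hu).2.2 (inj1 u (hmem' u hu).1 y hys (by rw [h, hby]))
            have h1c' : ∀ u ∈ s', σ₁ u ∈ s' := fun u hu =>
              hmem'' _ (h1c u (hmem' u hu).1) (hne1x u hu) (hne1y u hu)
            have h1i' : ∀ u ∈ s', σ₁ (σ₁ u) = u := fun u hu => h1i u (hmem' u hu).1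
            obtain ⟨c', hc'⟩ := ih s' hsub σ₀ σ₁ h0c' h0i' h1c' h1i'
            refine ⟨fun z => if z = x then true else if z = y then false else c' z, ?_⟩
            intro z hz
            beta_reduce
            by_cases hzx : z = x
            · subst hzx
              exact ⟨fun _ => by rw [← hydef]; simp [hyx], fun h => absurd hax h⟩
            by_cases hzy : z = y
            · subst hzy
              exact ⟨fun _ => by rw [hσ0y]; simp [hyx, hyx.symm], fun h => absurd hby h⟩
            · have hz' : z ∈ s' := hmem'' z hz hzx hzy
              obtain ⟨P0, P1⟩ := hc' z hz'
              constructor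
              · intro h
                rw [if_neg (hne0x z hz'), if_neg (hne0y z hz'), if_neg hzx, if_neg hzy]
                exact P0 h
              · intro h
                rw [if_neg (hne1x z hz'), if_neg (hne1y z hz'), if_neg hzx, if_neg hzy]
                exact P1 h
          · -- Case B2 : x σ₁-fixed, y not; patch at b := σ₁ y
            have hbne : σ₁ y ≠ y := hby
            have hbs' : σ₁ y ∈ s' := hmem'' _ hbs hbnx hby
            set b := σ₁ y with hbdef
            set σ₁' : γ → γ := Function.update σ₁ b b with hσdef
            have hupd : ∀ z, z ≠ b → σ₁' z = σ₁ z := fun z h => Function.update_of_ne h _ _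
            have hupdb : σ₁' b = b := Function.update_self _ _ _
            have hσ1bb : σ₁ b = y := hσ1b
            have hne1x' : ∀ u ∈ s', u ≠ b → σ₁ u ≠ x := by
              intro u hu _ h
              exact (hmem' u hu).2.1 (inj1 u (hmem' u hu).1 x hxs (by rw [h, hax]))
            have hne1y' : ∀ u ∈ s', u ≠ b → σ₁ u ≠ y := by
              intro u hu hub h
              exact hub (inj1 u (hmem' u hu).1 b hbs (h.trans hσ1bb.symm))
            have h1c' : ∀ u ∈ s', σ₁' u ∈ s' := by
              intro u hu
              by_cases hub : u = b
              · rw [hub, hupdb]; exact hbs'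
              · rw [hupd u hub]
                exact hmem'' _ (h1c u (hmem' u hu).1) (hne1x' u hu hub) (hne1y' u hu hub)
            have h1i' : ∀ u ∈ s', σ₁' (σ₁' u) = u := by
              intro u hu
              by_cases hub : u = b
              · rw [hub, hupdb, hupdb]
              · rw [hupd u hub]
                have hσub : σ₁ u ≠ b := by
                  intro h
                  have : u = y := inj1 u (hmem' u hu).1 y hys (h.trans hbdef)
                  exact (hmem' u hu).2.2 this
                rw [hupd _ hσub, h1i u (hmem' u hu).1]
            obtain ⟨c', hc'⟩ := ih s' hsub σ₀ σ₁' h0c' h0i' h1c' h1i'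
            refine ⟨fun z => if z = x then c' b else if z = y then !c' b else c' z, ?_⟩
            intro z hz
            beta_reduce
            by_cases hzx : z = x
            · subst hzx
              exact ⟨fun _ => by rw [← hydef]; simp [hyx], fun h => absurd hax h⟩
            by_cases hzy : z = y
            · subst hzy
              constructor
              · intro _; rw [hσ0y]; simp [hyx, hyx.symm]
              · intro _
                rw [← hbdef, if_neg hbnx, if_neg hby]
                simp [hyx]
            · have hz' : z ∈ s' := hmem'' z hz hzx hzy
              obtain ⟨P0, P1⟩ := hc' z hz'
              refine ⟨?_, ?_⟩
              · intro h
                rw [if_neg (hne0x z hz'), if_neg (hne0y z hz'), if_neg hzx, if_neg hzy]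
                exact P0 h
              · intro h
                by_cases hzb : z = b
                · subst hzb
                  rw [hσ1bb, if_neg hyx, if_pos rfl, if_neg hzx, if_neg hzy]
                · rw [if_neg (hne1x' z hz' hzb), if_neg (hne1y' z hz' hzb),
                    if_neg hzx, if_neg hzy, ← hupd z hzb]
                  exact P1 (by rw [hupd z hzb]; exact h)
        · -- σ₁ x ≠ x ; a := σ₁ x is a real partner, a ∉ {x, y}
          have has' : σ₁ x ∈ s' := hmem'' _ has hax hay
          set a := σ₁ x with hadef
          have hσ1ax : σ₁ a = x := hσ1a
          by_cases hby : σ₁ y = y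
          · -- Case B3 : y σ₁-fixed; patch at a
            set σ₁' : γ → γ := Function.update σ₁ a a with hσdef
            have hupd : ∀ z, z ≠ a → σ₁' z = σ₁ z := fun z h => Function.update_of_ne h _ _
            have hupda : σ₁' a = a := Function.update_self _ _ _
            have hne1x' : ∀ u ∈ s', u ≠ a → σ₁ u ≠ x := by
              intro u hu hua h
              exact hua (inj1 u (hmem' u hu).1 a has (by rw [h, hσ1ax]))
            have hne1y' : ∀ u ∈ s', u ≠ a → σ₁ u ≠ y := by
              intro u hu _ h
              exact (hmem' u hu).2.2 (inj1 u (hmem' u hu).1 y hys (by rw [h, hby]))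
            have h1c' : ∀ u ∈ s', σ₁' u ∈ s' := by
              intro u hu
              by_cases hua : u = a
              · rw [hua, hupda]; exact has'
              · rw [hupd u hua]
                exact hmem'' _ (h1c u (hmem' u hu).1) (hne1x' u hu hua) (hne1y' u hu hua)
            have h1i' : ∀ u ∈ s', σ₁' (σ₁' u) = u := by
              intro u hu
              by_cases hua : u = a
              · rw [hua, hupda, hupda]
              · rw [hupd u hua]
                have hσua : σ₁ u ≠ a := by
                  intro h
                  have : u = x := inj1 u (hmem' u hu).1 x hxs (h.trans hadef)
                  exact (hmem' u hu).2.1 this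
                rw [hupd _ hσua, h1i u (hmem' u hu).1]
            obtain ⟨c', hc'⟩ := ih s' hsub σ₀ σ₁' h0c' h0i' h1c' h1i'
            refine ⟨fun z => if z = x then !c' a else if z = y then c' a else c' z, ?_⟩
            intro z hz
            beta_reduce
            by_cases hzx : z = x
            · subst hzx
              constructor
              · intro _; rw [← hydef]; simp [hyx]
              · intro _
                rw [← hadef, if_neg hax, if_neg hay]
                simp [hyx]
            by_cases hzy : z = y
            · subst hzy
              exact ⟨fun _ => by rw [hσ0y]; simp [hyx, hyx.symm], fun h => absurd hby h⟩
            · have hz' : z ∈ s' := hmem'' z hz hzx hzy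
              obtain ⟨P0, P1⟩ := hc' z hz'
              refine ⟨?_, ?_⟩
              · intro h
                rw [if_neg (hne0x z hz'), if_neg (hne0y z hz'), if_neg hzx, if_neg hzy]
                exact P0 h
              · intro h
                by_cases hza : z = a
                · subst hza
                  rw [hσ1ax, if_pos rfl, if_neg hzx, if_neg hzy]
                · rw [if_neg (hne1x' z hz' hza), if_neg (hne1y' z hz' hza),
                    if_neg hzx, if_neg hzy, ← hupd z hza]
                  exact P1 (by rw [hupd z hza]; exact h)
          · -- Case B4 : both a = σ₁ x and b = σ₁ y are real partners outside {x,y}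
            have hbs' : σ₁ y ∈ s' := hmem'' _ hbs hbnx hby
            set b := σ₁ y with hbdef
            have hσ1bb : σ₁ b = y := hσ1b
            have hab : a ≠ b := by
              intro h
              have hxy : x = y := by rw [← hσ1ax, h, hσ1bb]
              exact hyx hxy.symm
            set σ₁' : γ → γ := Function.update (Function.update σ₁ a b) b a with hσdef
            have hupd : ∀ z, z ≠ a → z ≠ b → σ₁' z = σ₁ z := fun z h1 h2 => by
              rw [hσdef, Function.update_of_ne h2, Function.update_of_ne h1]
            have hupda : σ₁' a = b := by
              rw [hσdef, Function.update_of_ne hab, Function.update_self]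
            have hupdb : σ₁' b = a := by rw [hσdef, Function.update_self]
            have hne1x' : ∀ u ∈ s', u ≠ a → σ₁ u ≠ x := by
              intro u hu hua h
              exact hua (inj1 u (hmem' u hu).1 a has (by rw [h, hσ1ax]))
            have hne1y' : ∀ u ∈ s', u ≠ b → σ₁ u ≠ y := by
              intro u hu hub h
              exact hub (inj1 u (hmem' u hu).1 b hbs (by rw [h, hσ1bb]))
            have h1c' : ∀ u ∈ s', σ₁' u ∈ s' := by
              intro u hu
              by_cases hua : u = a
              · rw [hua, hupda]; exact hbs'
              by_cases hub : u = b
              · rw [hub, hupdb]; exact has'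
              · rw [hupd u hua hub]
                exact hmem'' _ (h1c u (hmem' u hu).1) (hne1x' u hu hua) (hne1y' u hu hub)
            have h1i' : ∀ u ∈ s', σ₁' (σ₁' u) = u := by
              intro u hu
              by_cases hua : u = a
              · rw [hua, hupda, hupdb]
              by_cases hub : u = b
              · rw [hub, hupdb, hupda]
              · rw [hupd u hua hub]
                have hσua : σ₁ u ≠ a := by
                  intro h
                  have : u = x := inj1 u (hmem' u hu).1 x hxs (h.trans hadef)
                  exact (hmem' u hu).2.1 this
                have hσub : σ₁ u ≠ b := by
                  intro h
                  have : u = y := inj1 u (hmem' u hu).1 y hys (h.trans hbdef)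
                  exact (hmem' u hu).2.2 this
                rw [hupd _ hσua hσub, h1i u (hmem' u hu).1]
            obtain ⟨c', hc'⟩ := ih s' hsub σ₀ σ₁' h0c' h0i' h1c' h1i'
            have hkey : c' b = !c' a := by
              have h := (hc' a has').2
              rw [hupda] at h
              exact h (fun hh => hab hh.symm)
            refine ⟨fun z => if z = x then !c' a else if z = y then !c' b else c' z, ?_⟩
            intro z hz
            beta_reduce
            by_cases hzx : z = x
            · subst hzx
              constructor
              · intro _
                rw [← hydef, if_neg hyx, if_pos rfl]
                rw [hkey]
                simp
              · intro _
                rw [← hadef, if_neg hax, if_neg hay]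
                simp
            by_cases hzy : z = y
            · subst hzy
              constructor
              · intro _
                rw [hσ0y, if_pos rfl, if_neg hyx, if_pos rfl]
                rw [hkey]
                simp
              · intro _
                rw [← hbdef, if_neg hbnx, if_neg hby]
                simp [hyx]
            · have hz' : z ∈ s' := hmem'' z hz hzx hzy
              obtain ⟨P0, P1⟩ := hc' z hz'
              refine ⟨?_, ?_⟩
              · intro h
                rw [if_neg (hne0x z hz'), if_neg (hne0y z hz'), if_neg hzx, if_neg hzy]
                exact P0 h
              · intro h
                by_cases hza : z = a
                · subst hza
                  rw [hσ1ax, if_pos rfl, if_neg hzx, if_neg hzy]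
                by_cases hzb : z = b
                · subst hzb
                  rw [hσ1bb, if_neg hyx, if_pos rfl, if_neg hzx, if_neg hzy]
                · rw [if_neg (hne1x' z hz' hza), if_neg (hne1y' z hz' hzb),
                    if_neg hzx, if_neg hzy, ← hupd z hza hzb]
                  exact P1 (by rw [hupd z hza hzb]; exact h)
    · -- σ₀ is the identity on s
      push_neg at H0
      by_cases H1 : ∃ x ∈ s, σ₁ x ≠ x
      · obtain ⟨x, hxs, hx1⟩ := H1
        have hy : σ₁ x ∈ s := h1c x hxs
        set y := σ₁ x with hydef
        have hys : y ∈ s := hy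
        have hyx : y ≠ x := hx1
        have hσ1y : σ₁ y = x := h1i x hxs
        set s' := (s.erase x).erase y with hs'def
        have hsub : s' ⊂ s := Finset.ssubset_of_subset_of_ssubset (Finset.erase_subset _ _) (Finset.erase_ssubset hxs)
        have hmem' : ∀ u ∈ s', u ∈ s ∧ u ≠ x ∧ u ≠ y := by
          intro u hu
          have h1 := Finset.mem_of_mem_erase hu
          exact ⟨Finset.mem_of_mem_erase h1, Finset.ne_of_mem_erase h1,
            Finset.ne_of_mem_erase hu⟩
        have hmem'' : ∀ u, u ∈ s → u ≠ x → u ≠ y → u ∈ s' :=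
          fun u hu h1 h2 => Finset.mem_erase.mpr ⟨h2, Finset.mem_erase.mpr ⟨h1, hu⟩⟩
        have hne1x : ∀ u ∈ s', σ₁ u ≠ x := by
          intro u hu h
          exact (hmem' u hu).2.2 (inj1 u (hmem' u hu).1 y hys (h.trans hσ1y.symm))
        have hne1y : ∀ u ∈ s', σ₁ u ≠ y := by
          intro u hu h
          exact (hmem' u hu).2.1 (inj1 u (hmem' u hu).1 x hxs (h.trans hydef))
        have h1c' : ∀ u ∈ s', σ₁ u ∈ s' := fun u hu =>
          hmem'' _ (h1c u (hmem' u hu).1) (hne1x u hu) (hne1y u hu)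
        have h1i' : ∀ u ∈ s', σ₁ (σ₁ u) = u := fun u hu => h1i u (hmem' u hu).1
        have h0c' : ∀ u ∈ s', σ₀ u ∈ s' := by
          intro u hu
          rw [H0 u (hmem' u hu).1]
          exact hu
        have h0i' : ∀ u ∈ s', σ₀ (σ₀ u) = u := by
          intro u hu
          rw [H0 u (hmem' u hu).1, H0 u (hmem' u hu).1]
        obtain ⟨c', hc'⟩ := ih s' hsub σ₀ σ₁ h0c' h0i' h1c' h1i'
        refine ⟨fun z => if z = x then true else if z = y then false else c' z, ?_⟩
        intro z hz
        beta_reduce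
        by_cases hzx : z = x
        · subst hzx
          exact ⟨fun h => absurd (H0 _ hz) h, fun _ => by rw [← hydef]; simp [hyx]⟩
        by_cases hzy : z = y
        · subst hzy
          exact ⟨fun h => absurd (H0 _ hz) h, fun _ => by rw [hσ1y]; simp [hyx, hyx.symm]⟩
        · have hz' : z ∈ s' := hmem'' z hz hzx hzy
          obtain ⟨P0, P1⟩ := hc' z hz'
          refine ⟨fun h => absurd (H0 z hz) h, ?_⟩
          intro h
          rw [if_neg (hne1x z hz'), if_neg (hne1y z hz'), if_neg hzx, if_neg hzy]
          exact P1 h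
      · push_neg at H1
        exact ⟨fun _ => true, fun z hz =>
          ⟨fun h => absurd (H0 z hz) h, fun h => absurd (H1 z hz) h⟩⟩

end Coloring

/-! ### Main theorem -/

/-- For groups of sizes (2,1) and responsive valuations, a balanced EF1 allocation
always exists. -/
theorem responsive_2_1_balanced_EF1 (γ : Type*) [Fintype γ] [DecidableEq γ]
    (u : Fin 2 → Finset γ → ℝ) (v : Finset γ → ℝ)
    (humono : ∀ j, Monotonic (u j)) (hunorm : ∀ j, Normalized (u j))
    (huresp : ∀ j, Responsive (u j))
    (hvmono : Monotonic v) (hvnorm : Normalized v) (hvresp : Responsive v) :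
    ∃ B₁ B₂ : Finset γ, Disjoint B₁ B₂ ∧ B₁ ∪ B₂ = Finset.univ ∧
      |(B₁.card : ℤ) - (B₂.card : ℤ)| ≤ 1 ∧
      (∀ j, EF1 (u j) B₁ B₂) ∧ EF1 v B₂ B₁ := by
  classical
  have exR : ∀ w : Finset γ → ℝ, ∃ R : List γ, R.Nodup ∧ R.toFinset = Finset.univ ∧
      R.Pairwise (fun a b => w {b} ≤ w {a}) := by
    intro w
    haveI : IsTotal γ (fun a b => w {b} ≤ w {a}) := ⟨fun a b => le_total _ _⟩
    haveI : IsTrans γ (fun a b => w {b} ≤ w {a}) := ⟨fun a b c h1 h2 => le_trans h2 h1⟩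
    refine ⟨List.insertionSort _ Finset.univ.toList, ?_, ?_, List.pairwise_insertionSort _ _⟩
    · exact (List.perm_insertionSort _ _).symm.nodup (Finset.nodup_toList _)
    · rw [List.toFinset_eq_of_perm _ _ (List.perm_insertionSort _ _), Finset.toList_toFinset]
  obtain ⟨R₀, h₀n, h₀u, h₀s⟩ := exR (u 0)
  obtain ⟨R₁, h₁n, h₁u, h₁s⟩ := exR (u 1)
  have hmemR₀ : ∀ a : γ, a ∈ R₀ := fun a => by
    rw [← List.mem_toFinset, h₀u]; exact Finset.mem_univ a
  have hmemR₁ : ∀ a : γ, a ∈ R₁ := fun a => by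
    rw [← List.mem_toFinset, h₁u]; exact Finset.mem_univ a
  obtain ⟨c, hc⟩ := exists_coloring Finset.univ (pairFn R₀) (pairFn R₁)
    (fun x _ => Finset.mem_univ _) (fun x _ => pairFn_invol R₀ h₀n x)
    (fun x _ => Finset.mem_univ _) (fun x _ => pairFn_invol R₁ h₁n x)
  have alt₀ : AltPairs c R₀ :=
    altPairs_of_pairFn c R₀ h₀n (fun x _ hne => (hc x (Finset.mem_univ x)).1 hne)
  have alt₁ : AltPairs c R₁ :=
    altPairs_of_pairFn c R₁ h₁n (fun x _ hne => (hc x (Finset.mem_univ x)).2 hne)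
  set X : Finset γ := (R₀.filter fun x => c x).toFinset with hX
  set Y : Finset γ := (R₀.filter fun x => !c x).toFinset with hY
  have hXY : Disjoint X Y := by
    rw [Finset.disjoint_left]
    intro a haX haY
    rw [hX, List.mem_toFinset, List.mem_filter] at haX
    rw [hY, List.mem_toFinset, List.mem_filter] at haY
    rw [haX.2] at haY
    simp at haY
  have hUn : X ∪ Y = Finset.univ := by
    ext a
    simp only [Finset.mem_union, hX, hY, List.mem_toFinset, List.mem_filter,
      Finset.mem_univ, iff_true]
    cases hca : c a
    · exact Or.inr ⟨hmemR₀ a, rfl⟩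
    · exact Or.inl ⟨hmemR₀ a, rfl⟩
  have hBal : |(X.card : ℤ) - (Y.card : ℤ)| ≤ 1 := by
    rw [hX, hY, List.toFinset_card_of_nodup (h₀n.filter _),
      List.toFinset_card_of_nodup (h₀n.filter _)]
    exact alt_balance c R₀ alt₀
  -- transfer of the X/Y description to the R₁ ordering
  have key : ∀ b : γ → Bool,
      (R₁.filter fun x => b x).toFinset = (R₀.filter fun x => b x).toFinset := by
    intro b
    rw [List.toFinset_filter, List.toFinset_filter, h₀u, h₁u]
  have notnot : ∀ R : List γ, (R.filter fun x => !(!c x)) = (R.filter fun x => c x) := by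
    intro R
    simp only [Bool.not_not]
  have E0 : EF1 (u 0) X Y := ef1_of_alt (u 0) (humono 0) (huresp 0) c R₀ h₀n h₀s alt₀
  have E0' : EF1 (u 0) Y X := by
    have h := ef1_of_alt (u 0) (humono 0) (huresp 0) (fun x => !c x) R₀ h₀n h₀s
      (altPairs_not c R₀ alt₀)
    rw [notnot R₀] at h
    exact h
  have E1 : EF1 (u 1) X Y := by
    have h := ef1_of_alt (u 1) (humono 1) (huresp 1) c R₁ h₁n h₁s alt₁
    rw [key (fun x => c x), key (fun x => !c x)] at h
    exact h
  have E1' : EF1 (u 1) Y X := by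
    have h := ef1_of_alt (u 1) (humono 1) (huresp 1) (fun x => !c x) R₁ h₁n h₁s
      (altPairs_not c R₁ alt₁)
    rw [notnot R₁, key (fun x => !c x), key (fun x => c x)] at h
    exact h
  have hEu : ∀ j : Fin 2, EF1 (u j) X Y := by
    intro j
    fin_cases j
    · exact E0
    · exact E1
  have hEu' : ∀ j : Fin 2, EF1 (u j) Y X := by
    intro j
    fin_cases j
    · exact E0'
    · exact E1'
  rcases le_total (v X) (v Y) with hv | hv
  · exact ⟨X, Y, hXY, hUn, hBal, hEu, ∅, Finset.empty_subset _, by simp,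
      by rw [Finset.sdiff_empty]; exact hv⟩
  · refine ⟨Y, X, hXY.symm, by rw [Finset.union_comm]; exact hUn, ?_, hEu',
      ∅, Finset.empty_subset _, by simp, by rw [Finset.sdiff_empty]; exact hv⟩
    rw [abs_sub_comm]
    exact hBal
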